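/- Suppose (X,d) is a geodesic metric space in which the intersection of any two closed metric balls is at Hausdorff distance at most ε from some closed metric ball, for a uniform constant ε ≥ 0. Then for any q ≥ 0 and any two points x,y ∈ X, every point on a q-path from x to y lies in the (2q+6ε)-neighborhood of any geodesic from x to y. -/

import Mathlib

open Metric Set

/-- `γ` is a unit-speed geodesic (an isometric embedding of a real interval)
on the set `s ⊆ ℝ`. -/
def IsGeodesicOn {X : Type*} [MetricSpace X] (γ : ℝ → X) (s : Set ℝ) : Prop :=
  ∀ a ∈ s, ∀ b ∈ s, dist (γ a) (γ b) = |a - b|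

/-- A geodesic metric space: any two points are joined by a geodesic. -/
def GeodesicSpace (X : Type*) [MetricSpace X] : Prop :=
  ∀ x y : X, ∃ γ : ℝ → X, γ 0 = x ∧ γ (dist x y) = y ∧
    IsGeodesicOn γ (Set.Icc 0 (dist x y))

/-- `S` is (the image of) a geodesic segment from `x` to `y`. -/
def IsGeodesicSegment {X : Type*} [MetricSpace X] (x y : X) (S : Set X) : Prop :=
  ∃ γ : ℝ → X, γ 0 = x ∧ γ (dist x y) = y ∧
    IsGeodesicOn γ (Set.Icc 0 (dist x y)) ∧ S = γ '' Set.Icc 0 (dist x y)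

/-- `X` is `δ`-hyperbolic: in any geodesic triangle each side lies in the
`δ`-neighbourhood of the union of the other two sides. -/
def DeltaHyperbolic (X : Type*) [MetricSpace X] (δ : ℝ) : Prop :=
  ∀ x y z : X, ∀ Sxy Syz Szx : Set X,
    IsGeodesicSegment x y Sxy → IsGeodesicSegment y z Syz → IsGeodesicSegment z x Szx →
    ∀ p ∈ Sxy, ∃ q ∈ Syz ∪ Szx, dist p q ≤ δ

/-- `A` and `B` are at Hausdorff distance at most `δ`: each is contained in the
`δ`-neighbourhood of the other. -/
def HausdorffClose {X : Type*} [MetricSpace X] (A B : Set X) (δ : ℝ) : Prop :=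
  (∀ a ∈ A, ∃ b ∈ B, dist a b ≤ δ) ∧ ∀ b ∈ B, ∃ a ∈ A, dist a b ≤ δ

/-- The set `S` has eccentricity at most `δ`: there are centres `c, c'` and a radius
`R ≥ 0` with `B(c,R) ⊆ S ⊆ B(c',R+δ)`; by convention the empty set has eccentricity `0`. -/
def EccentricityLE {X : Type*} [MetricSpace X] (S : Set X) (δ : ℝ) : Prop :=
  S = ∅ ∨ ∃ (c c' : X) (R : ℝ), 0 ≤ R ∧
    Metric.closedBall c R ⊆ S ∧ S ⊆ Metric.closedBall c' (R + δ)

/-- A `K`-path from `x` to `y` (parametrised on `[0,1]`): a continuous path from `x`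
to `y` every point `z` of which satisfies `d(x,z) + d(z,y) ≤ d(x,y) + K`. -/
def IsKPath {X : Type*} [MetricSpace X] (K : ℝ) (x y : X) (μ : ℝ → X) : Prop :=
  ContinuousOn μ (Set.Icc 0 1) ∧ μ 0 = x ∧ μ 1 = y ∧
  ∀ t ∈ Set.Icc (0:ℝ) 1, dist x (μ t) + dist (μ t) y ≤ dist x y + K

/-- If the intersection of any two closed balls is at Hausdorff distance at most `ε`
from some closed ball, then any point on a `q`-path from `x` to `y` lies in the
`(2q+6ε)`-neighbourhood of any geodesic from `x` to `y`. -/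
theorem kpath_close_to_geodesic_of_hausdorff
    {X : Type*} [MetricSpace X] (hX : GeodesicSpace X) (ε : ℝ) (hε : 0 ≤ ε)
    (hhaus : ∀ (x y : X) (s t : ℝ), 0 ≤ s → 0 ≤ t → ∃ (c : X) (R : ℝ),
      HausdorffClose (Metric.closedBall x s ∩ Metric.closedBall y t)
        (Metric.closedBall c R) ε)
    (q : ℝ) (hq : 0 ≤ q) (x y : X) (μ : ℝ → X) (hμ : IsKPath q x y μ)
    (γ : ℝ → X) (hγ0 : γ 0 = x) (hγ1 : γ (dist x y) = y)
    (hγ : IsGeodesicOn γ (Set.Icc 0 (dist x y))) :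
    ∀ tμ ∈ Set.Icc (0:ℝ) 1, ∃ tγ ∈ Set.Icc (0:ℝ) (dist x y),
      dist (μ tμ) (γ tγ) ≤ 2 * q + 6 * ε := by

  intro tμ htμ
  obtain ⟨hcont, hμ0, hμ1, hK⟩ := hμ
  have hD0 : (0:ℝ) ≤ dist x y := dist_nonneg
  have hs : (0:ℝ) ≤ dist x (μ tμ) := dist_nonneg
  have ht : (0:ℝ) ≤ dist (μ tμ) y := dist_nonneg
  have htri : dist x y ≤ dist x (μ tμ) + dist (μ tμ) y := dist_triangle x (μ tμ) y
  have hst : dist x (μ tμ) + dist (μ tμ) y ≤ dist x y + q := hK tμ htμ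
  set s := dist x (μ tμ) with hsdef
  set t := dist (μ tμ) y with htdef
  set u := min s (dist x y) with hu
  have hu0 : 0 ≤ u := le_min hs hD0
  have huD : u ≤ dist x y := min_le_right _ _
  have hus : u ≤ s := min_le_left _ _
  refine ⟨u, ⟨hu0, huD⟩, ?_⟩
  have hxm : dist x (γ u) = u := by
    have h := hγ 0 ⟨le_refl 0, hD0⟩ u ⟨hu0, huD⟩
    rw [hγ0] at h
    rw [h, abs_of_nonpos (by linarith), neg_sub, sub_zero]
  have hmy : dist (γ u) y = dist x y - u := by
    have h := hγ u ⟨hu0, huD⟩ (dist x y) ⟨hD0, le_refl _⟩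
    rw [hγ1] at h
    rw [h, abs_of_nonpos (by linarith)]
    ring
  -- membership of z and m in the intersection of balls
  have hzI : μ tμ ∈ Metric.closedBall x s ∩ Metric.closedBall y t := by
    constructor
    · simp [Metric.mem_closedBall, dist_comm]; exact hsdef.symm.le
    · simp [Metric.mem_closedBall]; exact htdef.symm.le
  have hmI : γ u ∈ Metric.closedBall x s ∩ Metric.closedBall y t := by
    constructor
    · simp only [Metric.mem_closedBall]
      rw [dist_comm, hxm]; exact hus
    · simp only [Metric.mem_closedBall]
      rw [hmy]
      have h2 : dist x y - t ≤ u := le_min (by linarith) (by linarith)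
      linarith
  obtain ⟨c, R, hH1, hH2⟩ := hhaus x y s t hs ht
  obtain ⟨b, hb, hzb⟩ := hH1 _ hzI
  have hR0 : 0 ≤ R := le_trans dist_nonneg (Metric.mem_closedBall.mp hb)
  have hzc : dist (μ tμ) c ≤ ε + R :=
    le_trans (dist_triangle _ b c) (by
      have := Metric.mem_closedBall.mp hb; linarith)
  obtain ⟨b', hb', hmb⟩ := hH1 _ hmI
  have hmc : dist (γ u) c ≤ ε + R :=
    le_trans (dist_triangle _ b' c) (by
      have := Metric.mem_closedBall.mp hb'; linarith)
  obtain ⟨c₀, hc₀I, hc₀c⟩ := hH2 c (Metric.mem_closedBall_self hR0)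
  have hxc : dist x c ≤ s + ε := by
    have h1 : dist c₀ x ≤ s := Metric.mem_closedBall.mp hc₀I.1
    calc dist x c ≤ dist x c₀ + dist c₀ c := dist_triangle _ _ _
    _ ≤ s + ε := by rw [dist_comm x c₀]; linarith
  by_cases hcase : R ≤ dist x c
  · -- the ball radius is bounded: R ≤ q + 2ε
    obtain ⟨σ, hσ0, hσc, hσ⟩ := hX x c
    have hw1 : (0:ℝ) ≤ dist x c - R := by linarith
    have hw2 : dist x c - R ≤ dist x c := by linarith
    have hxw : dist x (σ (dist x c - R)) = dist x c - R := by
      have h := hσ 0 ⟨le_refl 0, dist_nonneg⟩ (dist x c - R) ⟨hw1, hw2⟩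
      rw [hσ0] at h
      rw [h, abs_of_nonpos (by linarith), neg_sub, sub_zero]
    have hwc : σ (dist x c - R) ∈ Metric.closedBall c R := by
      have h := hσ (dist x c - R) ⟨hw1, hw2⟩ (dist x c) ⟨dist_nonneg, le_refl _⟩
      rw [hσc] at h
      simp only [Metric.mem_closedBall]
      rw [h, abs_of_nonpos (by linarith)]
      simp
    obtain ⟨i, hiI, hiw⟩ := hH2 _ hwc
    have hiy : dist i y ≤ t := Metric.mem_closedBall.mp hiI.2
    have hxi : dist x y - t ≤ dist x i := by
      have := dist_triangle x i y; linarith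
    have hxw' : dist x i - ε ≤ dist x (σ (dist x c - R)) := by
      have h := dist_triangle x (σ (dist x c - R)) i
      rw [dist_comm (σ (dist x c - R)) i] at h
      linarith
    have hRbound : R ≤ q + 2 * ε := by
      rw [hxw] at hxw'
      linarith
    calc dist (μ tμ) (γ u) ≤ dist (μ tμ) c + dist c (γ u) := dist_triangle _ _ _
    _ ≤ (ε + R) + (ε + R) := by rw [dist_comm c (γ u)]; linarith
    _ ≤ 2 * q + 6 * ε := by linarith
  · -- x itself is in the ball, so x is ε-close to the intersection
    push_neg at hcase
    have hxball : x ∈ Metric.closedBall c R := Metric.mem_closedBall.mpr (le_of_lt hcase)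
    obtain ⟨i, hiI, hix⟩ := hH2 x hxball
    have hiy : dist i y ≤ t := Metric.mem_closedBall.mp hiI.2
    have hDle : dist x y ≤ ε + t := by
      have := dist_triangle x i y
      rw [dist_comm i x] at hix
      linarith
    have hsle : s ≤ q + ε := by linarith
    calc dist (μ tμ) (γ u) ≤ dist (μ tμ) x + dist x (γ u) := dist_triangle _ _ _
    _ = s + u := by rw [dist_comm, hxm]
    _ ≤ 2 * q + 6 * ε := by linarith
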